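/- arXiv:1312.4887 — 9 statements merged into one kernel-verified Lean document; each statement's English description precedes it below -/
import Mathlib

section
/- Let (Ω, 𝒜, P) be a probability space with a filtration (ℱ_t)_{t ∈ ℝ}, let α ∈ ℝ, and let Z : ℝ → Ω → ℝ be a process such that for every t the random variable Z_t is ℱ_t-measurable and square integrable, the process t ↦ exp(α t) · Z_t is a martingale with respect to (ℱ_t), and there is a constant c > 0 with E[Z_t²] = c for all t ∈ ℝ. Then α ≥ 0. -/
open MeasureTheory
open scoped ENNReal

/-- If `g` is an `m`-measurable L² function equal a.e. to the conditional expectation of an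
L² function `f`, then the second moment of `g` is at most that of `f`. -/
lemma sq_integral_condexp_le
    {Ω : Type*} {m m0 : MeasurableSpace Ω} (hm : m ≤ m0)
    {P : Measure Ω} [IsProbabilityMeasure P] {f g : Ω → ℝ}
    (hf : MemLp f 2 P) (hg : MemLp g 2 P)
    (hgm : StronglyMeasurable[m] g)
    (hcond : P[f | m] =ᵐ[P] g) :
    ∫ ω, (g ω) ^ 2 ∂P ≤ ∫ ω, (f ω) ^ 2 ∂P := by
  have h2 : (1 : ℝ≥0∞) / 1 = 1 / 2 + 1 / 2 := by
    simp only [one_div]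
    rw [inv_one, ENNReal.inv_two_add_inv_two]
  have hgf : Integrable (g * f) P := memLp_one_iff_integrable.mp (hf.smul (r := 1) hg)
  have hgg : Integrable (g * g) P := memLp_one_iff_integrable.mp (hg.smul (r := 1) hg)
  have hff : Integrable (f * f) P := memLp_one_iff_integrable.mp (hf.smul (r := 1) hf)
  have hfi : Integrable f P := hf.integrable (by norm_num)
  -- pull-out property: ∫ g f = ∫ g g
  have hpull : P[g * f | m] =ᵐ[P] g * P[f | m] :=
    condExp_mul_of_stronglyMeasurable_left hgm hgf hfi
  have key : ∫ ω, g ω * f ω ∂P = ∫ ω, g ω * g ω ∂P := by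
    have h1 : ∫ ω, (P[g * f | m]) ω ∂P = ∫ ω, g ω * f ω ∂P := integral_condExp hm
    rw [← h1]
    refine integral_congr_ae ?_
    filter_upwards [hpull, hcond] with ω h1 h2
    simp only [Pi.mul_apply] at h1 ⊢
    rw [h1, h2]
  have hnonneg : 0 ≤ ∫ ω, (f ω - g ω) ^ 2 ∂P :=
    integral_nonneg fun ω => sq_nonneg _
  have hexpand : ∫ ω, (f ω - g ω) ^ 2 ∂P
      = ∫ ω, f ω * f ω ∂P - 2 * ∫ ω, g ω * f ω ∂P + ∫ ω, g ω * g ω ∂P := by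
    have heq : (fun ω => (f ω - g ω) ^ 2)
        = fun ω => (f ω * f ω - 2 * (g ω * f ω)) + g ω * g ω := by
      funext ω; ring
    have hff' : Integrable (fun ω => f ω * f ω) P := hff
    have hgg' : Integrable (fun ω => g ω * g ω) P := hgg
    have hgf' : Integrable (fun ω => 2 * (g ω * f ω)) P := hgf.const_mul 2
    have hsub : Integrable (fun ω => f ω * f ω - 2 * (g ω * f ω)) P := hff'.sub hgf'
    rw [heq, integral_add hsub hgg', integral_sub hff' hgf',
      integral_const_mul]
  have h3 : ∫ ω, g ω * g ω ∂P ≤ ∫ ω, f ω * f ω ∂P := by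
    rw [key] at hexpand
    linarith
  simpa [pow_two] using h3

theorem correlation_index_nonneg
    {Ω : Type*} {m0 : MeasurableSpace Ω} {P : Measure Ω} [IsProbabilityMeasure P]
    (ℱ : Filtration ℝ m0) (α : ℝ) (Z : ℝ → Ω → ℝ)
    (hadapted : ∀ t, StronglyMeasurable[ℱ t] (Z t))
    (hL2 : ∀ t, MemLp (Z t) 2 P)
    (hmart : Martingale (fun t ω => Real.exp (α * t) * Z t ω) ℱ P)
    (c : ℝ) (hc : 0 < c)
    (hstat : ∀ t, ∫ ω, (Z t ω) ^ 2 ∂P = c) :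
    0 ≤ α := by
  set M : ℝ → Ω → ℝ := fun t ω => Real.exp (α * t) * Z t ω with hM
  have hM2 : ∀ t, MemLp (M t) 2 P := fun t => (hL2 t).const_mul _
  have hMm : StronglyMeasurable[ℱ 0] (M 0) := (hadapted 0).const_mul _
  have hcond : P[M 1 | ℱ 0] =ᵐ[P] M 0 := hmart.condExp_ae_eq zero_le_one
  have hsq : ∀ t, ∫ ω, (M t ω) ^ 2 ∂P = Real.exp (α * t) ^ 2 * c := by
    intro t
    have : ∀ ω, (M t ω) ^ 2 = Real.exp (α * t) ^ 2 * (Z t ω) ^ 2 := by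
      intro ω; simp [hM, mul_pow]
    simp_rw [this]
    rw [integral_const_mul, hstat]
  have hle : ∫ ω, (M 0 ω) ^ 2 ∂P ≤ ∫ ω, (M 1 ω) ^ 2 ∂P :=
    sq_integral_condexp_le (ℱ.le 0) (hM2 1) (hM2 0) hMm hcond
  rw [hsq 0, hsq 1] at hle
  simp only [mul_zero, Real.exp_zero, one_pow, one_mul, mul_one] at hle
  have h1 : (1 : ℝ) ≤ Real.exp α ^ 2 := le_of_mul_le_mul_right (by linarith) hc |>.trans_eq rfl
  have h2 : Real.exp 0 ≤ Real.exp (2 * α) := by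
    rw [← Real.exp_nat_mul] at *
    · simpa [Real.exp_zero, two_mul, ← Real.exp_add, pow_two, ← Real.exp_add] using h1
  have := Real.exp_le_exp.mp h2
  linarith
end

section
/- Let (Ω, 𝒜, P) be a probability space, X : ℝ → Ω → ℝ a stochastic process, f, g : ℝ → ℝ Borel measurable functions with f(X_t) and g(X_t) square integrable for every t, and let α, β ∈ ℝ with α ≠ β. Assume that for all s ≤ t: E[f(X_t) | σ(X_s)] = exp(-α(t-s)) f(X_s) a.s. and E[g(X_s) | σ(X_t)] = exp(-β(t-s)) g(X_t) a.s., and that there is a constant c with E[f(X_t) g(X_t)] = c for all t ∈ ℝ. Then c = 0, i.e. f(X_t) and g(X_t) are orthogonal in L²(P) for every t. -/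
open MeasureTheory

theorem orthogonality_of_distinct_correlation_indices
    {Ω : Type*} {m0 : MeasurableSpace Ω} {P : Measure Ω} [IsProbabilityMeasure P]
    (X : ℝ → Ω → ℝ) (hX : ∀ t, Measurable (X t))
    (f g : ℝ → ℝ) (hf : Measurable f) (hg : Measurable g)
    (hfL2 : ∀ t, MemLp (fun ω => f (X t ω)) 2 P)
    (hgL2 : ∀ t, MemLp (fun ω => g (X t ω)) 2 P)
    (α β : ℝ) (hαβ : α ≠ β)
    (hfwd : ∀ s t : ℝ, s ≤ t →
      P[(fun ω => f (X t ω)) | MeasurableSpace.comap (X s) (borel ℝ)]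
        =ᵐ[P] fun ω => Real.exp (-α * (t - s)) * f (X s ω))
    (hbwd : ∀ s t : ℝ, s ≤ t →
      P[(fun ω => g (X s ω)) | MeasurableSpace.comap (X t) (borel ℝ)]
        =ᵐ[P] fun ω => Real.exp (-β * (t - s)) * g (X t ω))
    (c : ℝ) (hstat : ∀ t : ℝ, ∫ ω, f (X t ω) * g (X t ω) ∂P = c) :
    c = 0 := by
  have hborel : (borel ℝ) = (inferInstance : MeasurableSpace ℝ) := rfl
  -- integrability of products
  have hInt : ∀ s t : ℝ, Integrable (fun ω => f (X t ω) * g (X s ω)) P := by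
    intro s t
    have h := ((hfL2 t).smul (hgL2 s) : MemLp _ 1 P)
    have := memLp_one_iff_integrable.mp h
    simpa [smul_eq_mul, Pi.mul_def, mul_comm] using this
  have hIntfg : ∀ t : ℝ, Integrable (fun ω => f (X t ω) * g (X t ω)) P := fun t => hInt t t
  -- the σ-algebras
  set m1 : MeasurableSpace Ω := MeasurableSpace.comap (X 0) (borel ℝ) with hm1def
  set m2 : MeasurableSpace Ω := MeasurableSpace.comap (X 1) (borel ℝ) with hm2def
  have hm1 : m1 ≤ m0 := (hX 0).comap_le
  have hm2 : m2 ≤ m0 := (hX 1).comap_le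
  have hX0m : Measurable[m1] (X 0) := comap_measurable (X 0)
  have hX1m : Measurable[m2] (X 1) := comap_measurable (X 1)
  -- key quantity
  have hA : ∫ ω, g (X 0 ω) * f (X 1 ω) ∂P = Real.exp (-α * (1 - 0)) * c := by
    have hgm : StronglyMeasurable[m1] (fun ω => g (X 0 ω)) :=
      (hg.comp hX0m).stronglyMeasurable
    have hIfg : Integrable ((fun ω => g (X 0 ω)) * fun ω => f (X 1 ω)) P := by
      simpa [Pi.mul_def, mul_comm] using hInt 0 1
    have hpull := condExp_mul_of_stronglyMeasurable_left (μ := P) hgm hIfg ((hfL2 1).integrable one_le_two)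
    have h1 : ∫ ω, g (X 0 ω) * f (X 1 ω) ∂P
        = ∫ ω, (P[(fun ω => g (X 0 ω)) * (fun ω => f (X 1 ω))|m1]) ω ∂P :=
      (integral_condExp hm1).symm
    have h2 : ((fun ω => g (X 0 ω)) * P[(fun ω => f (X 1 ω))|m1])
        =ᵐ[P] fun ω => g (X 0 ω) * (Real.exp (-α * (1 - 0)) * f (X 0 ω)) := by
      filter_upwards [hfwd 0 1 (by norm_num)] with ω hω
      simp [hm1def, hω]
    have h3 := hpull.trans h2
    rw [h1, integral_congr_ae h3]
    have : (fun ω => g (X 0 ω) * (Real.exp (-α * (1 - 0)) * f (X 0 ω)))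
        = fun ω => Real.exp (-α * (1 - 0)) * (f (X 0 ω) * g (X 0 ω)) := by
      funext ω; ring
    rw [this, integral_const_mul, hstat 0]
  have hB : ∫ ω, g (X 0 ω) * f (X 1 ω) ∂P = Real.exp (-β * (1 - 0)) * c := by
    have hfm : StronglyMeasurable[m2] (fun ω => f (X 1 ω)) :=
      (hf.comp hX1m).stronglyMeasurable
    have hIfg : Integrable ((fun ω => f (X 1 ω)) * fun ω => g (X 0 ω)) P := by
      simpa [Pi.mul_def] using hInt 0 1
    have hpull := condExp_mul_of_stronglyMeasurable_left (μ := P) hfm hIfg ((hgL2 0).integrable one_le_two)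
    have h1 : ∫ ω, f (X 1 ω) * g (X 0 ω) ∂P
        = ∫ ω, (P[(fun ω => f (X 1 ω)) * (fun ω => g (X 0 ω))|m2]) ω ∂P :=
      (integral_condExp hm2).symm
    have h2 : ((fun ω => f (X 1 ω)) * P[(fun ω => g (X 0 ω))|m2])
        =ᵐ[P] fun ω => f (X 1 ω) * (Real.exp (-β * (1 - 0)) * g (X 1 ω)) := by
      filter_upwards [hbwd 0 1 (by norm_num)] with ω hω
      simp [hm2def, hω]
    have h3 := hpull.trans h2
    have hcomm : ∫ ω, g (X 0 ω) * f (X 1 ω) ∂P = ∫ ω, f (X 1 ω) * g (X 0 ω) ∂P := by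
      congr 1; funext ω; ring
    rw [hcomm, h1, integral_congr_ae h3]
    have : (fun ω => f (X 1 ω) * (Real.exp (-β * (1 - 0)) * g (X 1 ω)))
        = fun ω => Real.exp (-β * (1 - 0)) * (f (X 1 ω) * g (X 1 ω)) := by
      funext ω; ring
    rw [this, integral_const_mul, hstat 1]
  have hkey : Real.exp (-α * (1 - 0)) * c = Real.exp (-β * (1 - 0)) * c := hA ▸ hB
  have hne : Real.exp (-α * (1 - 0)) ≠ Real.exp (-β * (1 - 0)) := by
    intro h
    exact hαβ (by have := Real.exp_injective h; linarith)
  by_contra hc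
  exact hne (mul_right_cancel₀ hc hkey)
end

section
/- For every λ > 0 and f ∈ H, the H-valued function t ↦ exp(-λ t) • U_t f is Bochner integrable on [0, ∞), its integral R_λ f := ∫₀^∞ exp(-λ t) • U_t f dt is the unique element of H whose n-th coordinate with respect to e equals c_n / (λ + α n) (where c_n is the n-th coordinate of f), and ‖R_λ f‖ ≤ ‖f‖ / λ. -/
open MeasureTheory

lemma integral_exp_neg_mul_Ioi_zero {b : ℝ} (hb : 0 < b) :
    ∫ t in Set.Ioi (0 : ℝ), Real.exp (-b * t) = 1 / b := by
  have h : ∀ t : ℝ, Real.exp (-b * t) = (fun x => Real.exp (-x)) (b * t) := by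
    intro t; simp [neg_mul]
  simp_rw [h]
  rw [integral_comp_mul_left_Ioi (fun x => Real.exp (-x)) 0 hb]
  simp [integral_exp_neg_Ioi, integral_exp_Iic_zero, smul_eq_mul, one_div]

theorem resolvent_of_transition_semigroup
    {H : Type*} [NormedAddCommGroup H] [InnerProductSpace ℝ H] [CompleteSpace H]
    (e : HilbertBasis ℕ ℝ H) (α : ℕ → ℝ) (hα : ∀ n, 0 ≤ α n)
    (U : ℝ → H → H)
    (hU : ∀ t : ℝ, 0 ≤ t → ∀ (f : H) (n : ℕ),
      e.repr (U t f) n = Real.exp (-(α n) * t) * e.repr f n)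
    (l : ℝ) (hl : 0 < l) (f : H) :
    IntegrableOn (fun t : ℝ => Real.exp (-l * t) • U t f) (Set.Ioi 0) volume ∧
    (∀ n : ℕ,
      e.repr (∫ t in Set.Ioi (0 : ℝ), Real.exp (-l * t) • U t f) n
        = e.repr f n / (l + α n)) ∧
    ‖∫ t in Set.Ioi (0 : ℝ), Real.exp (-l * t) • U t f‖ ≤ ‖f‖ / l := by
  -- norm bound on U t f
  have hUnorm : ∀ t : ℝ, 0 ≤ t → ‖U t f‖ ≤ ‖f‖ := by
    intro t ht
    rw [← e.repr.norm_map (U t f), ← e.repr.norm_map f]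
    have h2 : (0:ℝ) < (2 : ENNReal).toReal := by norm_num
    refine lp.norm_le_of_forall_sum_le h2 (norm_nonneg _) fun s => ?_
    refine le_trans (Finset.sum_le_sum fun i _ => ?_)
      (lp.sum_rpow_le_norm_rpow h2 (e.repr f) s)
    refine Real.rpow_le_rpow (norm_nonneg _) ?_ h2.le
    rw [hU t ht f i, Real.norm_eq_abs, Real.norm_eq_abs, abs_mul,
      abs_of_pos (Real.exp_pos _)]
    have : Real.exp (-(α i) * t) ≤ 1 := by
      apply Real.exp_le_one_iff.2
      have := hα i
      nlinarith
    nlinarith [abs_nonneg (e.repr f i)]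
  -- measurability
  have hmeas : AEStronglyMeasurable (fun t : ℝ => U t f)
      (volume.restrict (Set.Ioi 0)) := by
    refine aestronglyMeasurable_of_tendsto_ae Filter.atTop
      (f := fun N (t : ℝ) =>
        ∑ n ∈ Finset.range N, (Real.exp (-(α n) * t) * e.repr f n) • e n)
      (fun N => ?_) ?_
    · exact (Continuous.aestronglyMeasurable (by fun_prop))
    · refine (ae_restrict_iff' measurableSet_Ioi).2 (Filter.Eventually.of_forall
        fun t ht => ?_)
      have h := e.hasSum_repr (U t f)
      simp_rw [hU t (le_of_lt ht) f] at h
      exact h.tendsto_sum_nat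
  have hsm : AEStronglyMeasurable (fun t : ℝ => Real.exp (-l * t) • U t f)
      (volume.restrict (Set.Ioi 0)) := by
    exact (Continuous.aestronglyMeasurable (by fun_prop)
      : AEStronglyMeasurable (fun t : ℝ => Real.exp (-l * t)) _).smul hmeas
  have hg : IntegrableOn (fun t : ℝ => Real.exp (-l * t) * ‖f‖) (Set.Ioi 0) :=
    (exp_neg_integrableOn_Ioi 0 hl).mul_const _
  have hbd : ∀ᵐ t ∂(volume.restrict (Set.Ioi (0:ℝ))),
      ‖Real.exp (-l * t) • U t f‖ ≤ Real.exp (-l * t) * ‖f‖ := by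
    refine (ae_restrict_iff' measurableSet_Ioi).2 (Filter.Eventually.of_forall
      fun t ht => ?_)
    rw [norm_smul, Real.norm_eq_abs, abs_of_pos (Real.exp_pos _)]
    exact mul_le_mul_of_nonneg_left (hUnorm t (le_of_lt ht)) (Real.exp_pos _).le
  have hint : IntegrableOn (fun t : ℝ => Real.exp (-l * t) • U t f) (Set.Ioi 0) :=
    Integrable.mono' hg hsm hbd
  refine ⟨hint, ?_, ?_⟩
  · intro n
    have hb : 0 < l + α n := by linarith [hα n]
    rw [e.repr_apply_apply, ← integral_inner hint (e n)]
    have heq : Set.EqOn (fun t : ℝ => (inner ℝ (e n) (Real.exp (-l * t) • U t f) : ℝ))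
        (fun t : ℝ => Real.exp (-(l + α n) * t) * e.repr f n) (Set.Ioi 0) := by
      intro t ht
      simp only [real_inner_smul_right]
      rw [← e.repr_apply_apply, hU t (le_of_lt ht) f n, neg_add, add_mul,
        Real.exp_add]
      ring
    rw [setIntegral_congr_fun measurableSet_Ioi heq, integral_mul_const,
      integral_exp_neg_mul_Ioi_zero hb]
    field_simp
  · have h1 : ‖∫ t in Set.Ioi (0:ℝ), Real.exp (-l * t) • U t f‖
        ≤ ∫ t in Set.Ioi (0:ℝ), Real.exp (-l * t) * ‖f‖ :=
      norm_integral_le_of_norm_le hg hbd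
    rw [integral_mul_const, integral_exp_neg_mul_Ioi_zero hl] at h1
    calc ‖∫ t in Set.Ioi (0:ℝ), Real.exp (-l * t) • U t f‖
        ≤ 1 / l * ‖f‖ := h1
      _ = ‖f‖ / l := by ring
end

section
/- Let f ∈ H have coordinates c_n with respect to e and suppose ∑'_{n} (α n)² (c_n)² < ∞. Let g ∈ H be the unique element whose n-th coordinate equals -(α n) c_n. Then (1/t) • (U_t f - f) tends to g in H as t → 0⁺. In other words, the operator A f = -∑ α_n c_n e_n is the infinitesimal generator of the semigroup (U_t) on the domain D_A = {f : ∑ (α n)² (c_n)² < ∞}. -/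
open Filter Topology

private lemma slope_aux (a : ℝ) (ha : 0 ≤ a) :
    Tendsto (fun t : ℝ => (Real.exp (-a * t) - 1) / t + a) (nhdsWithin 0 (Set.Ioi 0)) (nhds 0) := by
  have hd : HasDerivAt (fun t : ℝ => Real.exp (-a * t)) (-a) 0 := by
    have := (Real.hasDerivAt_exp (-a * 0)).comp 0 ((hasDerivAt_id 0).const_mul (-a))
    simpa [Function.comp_def, neg_mul] using this
  have h1 : Tendsto (fun t : ℝ => (Real.exp (-a * t) - 1) / t) (nhdsWithin 0 (Set.Ioi 0))
      (nhds (-a)) := by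
    have := hd.hasDerivWithinAt (s := Set.Ioi 0)
    rw [hasDerivWithinAt_iff_tendsto_slope] at this
    have hsub : nhdsWithin (0:ℝ) (Set.Ioi 0 \ {0}) = nhdsWithin 0 (Set.Ioi 0) := by
      congr 1
      ext x; simp (config := {contextual := true}) [ne_of_gt]
    rw [hsub] at this
    refine this.congr fun t => ?_
    simp [slope_def_field, neg_mul]
  have := h1.add (tendsto_const_nhds (x := a))
  simpa using this

private lemma sandwich_aux (a t : ℝ) (ha : 0 ≤ a) (ht : 0 < t) :
    |(Real.exp (-a * t) - 1) / t + a| ≤ a := by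
  have h1 : Real.exp (-a * t) ≤ 1 := by
    apply Real.exp_le_one_iff.mpr
    nlinarith
  have h2 : 1 - a * t ≤ Real.exp (-a * t) := by
    have := Real.add_one_le_exp (-a * t)
    linarith
  rw [abs_le]
  constructor
  · have : -a ≤ (Real.exp (-a * t) - 1) / t := by
      rw [le_div_iff₀ ht]; nlinarith
    linarith
  · have : (Real.exp (-a * t) - 1) / t ≤ 0 := div_nonpos_of_nonpos_of_nonneg (by linarith) ht.le
    linarith

private lemma norm_sq_eq_tsum_repr {H : Type*} [NormedAddCommGroup H] [InnerProductSpace ℝ H]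
    (e : HilbertBasis ℕ ℝ H) (x : H) : ‖x‖ ^ 2 = ∑' n, (e.repr x n) ^ 2 := by
  have := e.tsum_inner_mul_inner x x
  rw [real_inner_self_eq_norm_sq] at this
  rw [← this]
  congr 1; ext n
  rw [e.repr_apply_apply, real_inner_comm]
  ring

theorem infinitesimal_generator_of_transition_semigroup
    {H : Type*} [NormedAddCommGroup H] [InnerProductSpace ℝ H]
    (e : HilbertBasis ℕ ℝ H) (α : ℕ → ℝ) (hα : ∀ n, 0 ≤ α n)
    (U : ℝ → H → H)
    (hU : ∀ t : ℝ, 0 ≤ t → ∀ (f : H) (n : ℕ),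
      e.repr (U t f) n = Real.exp (-(α n) * t) * e.repr f n)
    (f : H) (hf : Summable (fun n => (α n) ^ 2 * (e.repr f n) ^ 2))
    (g : H) (hg : ∀ n, e.repr g n = -(α n) * e.repr f n) :
    Filter.Tendsto (fun t : ℝ => (1 / t) • (U t f - f))
      (nhdsWithin 0 (Set.Ioi 0)) (nhds g) := by
  rw [tendsto_iff_norm_sub_tendsto_zero]
  set c : ℕ → ℝ := fun n => e.repr f n with hc
  -- norm squared formula
  have key : ∀ t : ℝ, 0 < t → ‖(1 / t) • (U t f - f) - g‖ ^ 2
      = ∑' n, (c n) ^ 2 * ((Real.exp (-(α n) * t) - 1) / t + α n) ^ 2 := by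
    intro t ht
    rw [norm_sq_eq_tsum_repr e]
    congr 1; ext n
    have : e.repr ((1 / t) • (U t f - f) - g) n
        = (1 / t) * (e.repr (U t f) n - c n) - e.repr g n := by
      simp [map_sub, map_smul, hc]
      rfl
    rw [this, hU t ht.le f n, hg n]
    field_simp
    ring
  have hsum : Tendsto (fun t : ℝ => ∑' n, (c n) ^ 2 * ((Real.exp (-(α n) * t) - 1) / t + α n) ^ 2)
      (nhdsWithin 0 (Set.Ioi 0)) (nhds 0) := by
    have main := tendsto_tsum_of_dominated_convergence (𝓕 := nhdsWithin (0:ℝ) (Set.Ioi 0))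
      (g := fun _ : ℕ => (0:ℝ))
      (f := fun t n => (c n) ^ 2 * ((Real.exp (-(α n) * t) - 1) / t + α n) ^ 2)
      (bound := fun n => (α n) ^ 2 * (c n) ^ 2) hf ?_ ?_
    · simpa using main
    · intro n
      have := slope_aux (α n) (hα n)
      have h2 := (this.pow 2).const_mul ((c n) ^ 2)
      simpa using h2
    · filter_upwards [self_mem_nhdsWithin] with t ht
      intro n
      have hb := sandwich_aux (α n) t (hα n) ht
      have : ((Real.exp (-(α n) * t) - 1) / t + α n) ^ 2 ≤ (α n) ^ 2 := by
        have := sq_le_sq' (neg_le_of_abs_le hb |>.trans_eq rfl) (le_of_abs_le hb)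
        simpa using this
      rw [Real.norm_eq_abs, abs_of_nonneg (by positivity)]
      nlinarith [sq_nonneg (c n)]
  have hnorm : Tendsto (fun t : ℝ => ‖(1 / t) • (U t f - f) - g‖ ^ 2)
      (nhdsWithin 0 (Set.Ioi 0)) (nhds 0) := by
    apply hsum.congr'
    filter_upwards [self_mem_nhdsWithin] with t ht
    exact (key t ht).symm
  have := (Real.continuous_sqrt.tendsto 0).comp hnorm
  simp only [Function.comp_def] at this
  rw [Real.sqrt_zero] at this
  refine this.congr fun t => ?_
  simp [Real.sqrt_sq (norm_nonneg _)]
end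

section
/- Let γ > 0 and let a, b ≥ 0 be real numbers. If for every τ > 0 the identity exp(-τ(a+b)) + exp(-τ(a+b+2γ)) = exp(-τ(γ+2a)) + exp(-τ(γ+2b)) holds, then |a - b| = γ. (Applied with a = α_{n-1}, b = α_n and γ = α₁, this is the step showing that a regular stationary Markov process with polynomial regression is a harness only if α_n = n α₁ for all n.) -/
theorem harness_exponential_identity_forces_spacing
    (γ a b : ℝ) (hγ : 0 < γ) (ha : 0 ≤ a) (hb : 0 ≤ b)
    (hid : ∀ τ : ℝ, 0 < τ →
      Real.exp (-τ * (a + b)) + Real.exp (-τ * (a + b + 2 * γ)) =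
        Real.exp (-τ * (γ + 2 * a)) + Real.exp (-τ * (γ + 2 * b))) :
    |a - b| = γ := by
  have h := hid 1 one_pos
  rw [show (-(1:ℝ)) * (a + b) = -a + -b by ring,
      show (-(1:ℝ)) * (a + b + 2 * γ) = -a + -b + (-γ + -γ) by ring,
      show (-(1:ℝ)) * (γ + 2 * a) = -γ + (-a + -a) by ring,
      show (-(1:ℝ)) * (γ + 2 * b) = -γ + (-b + -b) by ring] at h
  simp only [Real.exp_add] at h
  set u := Real.exp (-γ) with hu
  set p := Real.exp (-a) with hp
  set q := Real.exp (-b) with hq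
  have hfac : (u * p - q) * (p - u * q) = 0 := by linear_combination -h
  rcases mul_eq_zero.mp hfac with h1 | h1
  · have : Real.exp (-γ + -a) = Real.exp (-b) := by
      rw [Real.exp_add, ← hu, ← hp, ← hq]; linarith
    have := Real.exp_injective this
    rw [abs_of_nonpos (by linarith)]; linarith
  · have : Real.exp (-a) = Real.exp (-γ + -b) := by
      rw [Real.exp_add, ← hu, ← hp, ← hq]; linarith
    have := Real.exp_injective this
    rw [abs_of_nonneg (by linarith)]; linarith
end

section
/- Let α > 0, let s < t < u be real numbers, and define a_L = exp(-α(u-s)) (exp(α(u-t)) - exp(-α(u-t))) / (1 - exp(-2α(u-s))) and a_R = exp(-α(u-s)) (exp(α(t-s)) - exp(-α(t-s))) / (1 - exp(-2α(u-s))). Then for every natural number n ≥ 1, exp(-(n-1)α(t-s) - nα(u-t)) = a_L · exp(-nα(u-s)) + a_R · exp(-(n-1)α(u-s)). (This identity shows that if the correlation indices satisfy α_n = n α₁, then the harness condition holds for every n, i.e. the 'if' direction of the characterization of harnesses among regular stationary Markov processes with polynomial regression.) -/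
theorem harness_condition_holds_for_all_n
    (α s t u : ℝ) (hα : 0 < α) (hst : s < t) (htu : t < u) (n : ℕ) (hn : 1 ≤ n) :
    Real.exp (-((n : ℝ) - 1) * α * (t - s) - (n : ℝ) * α * (u - t)) =
      Real.exp (-α * (u - s)) * (Real.exp (α * (u - t)) - Real.exp (-α * (u - t))) /
          (1 - Real.exp (-2 * α * (u - s))) * Real.exp (-(n : ℝ) * α * (u - s)) +
      Real.exp (-α * (u - s)) * (Real.exp (α * (t - s)) - Real.exp (-α * (t - s))) /
          (1 - Real.exp (-2 * α * (u - s))) * Real.exp (-((n : ℝ) - 1) * α * (u - s)) := by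
  have hus : 0 < u - s := by linarith
  have hE : Real.exp (-2 * α * (u - s)) < 1 := by
    rw [Real.exp_lt_one_iff]
    nlinarith
  have hD : 1 - Real.exp (-2 * α * (u - s)) ≠ 0 := by linarith
  rw [div_mul_eq_mul_div, div_mul_eq_mul_div, ← add_div, eq_div_iff hD]
  simp only [mul_sub, sub_mul, mul_one, one_mul, ← Real.exp_add]
  ring_nf
end

section
/- Let m, d : ℕ → ℝ satisfy m 0 = 1, d 0 = 1, and for every j ≥ 1: j · m j + ∑_{k=0}^{j-1} (j choose k) · d (j-k) · m k = 0. Define the formal power series φ = ∑_{j≥0} (m j / j!) X^j and D = ∑_{j≥0} (d j / j!) X^j in ℝ⟦X⟧. Then X · φ' = φ · (1 - D), where φ' denotes the formal derivative of φ. -/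
open PowerSeries

theorem moment_generating_function_ode
    (m d : ℕ → ℝ) (hm0 : m 0 = 1) (hd0 : d 0 = 1)
    (hrec : ∀ j : ℕ, 1 ≤ j →
      (j : ℝ) * m j + ∑ k ∈ Finset.range j, (j.choose k : ℝ) * d (j - k) * m k = 0) :
    PowerSeries.X * (d⁄dX ℝ) (PowerSeries.mk fun j => m j / (j.factorial : ℝ)) =
      (PowerSeries.mk fun j => m j / (j.factorial : ℝ)) *
        (1 - PowerSeries.mk fun j => d j / (j.factorial : ℝ)) := by
  ext n
  rcases n with _ | n
  · simp [coeff_zero_eq_constantCoeff, hm0, hd0]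
  · rw [coeff_succ_X_mul, coeff_derivative, mul_one_sub, map_sub, coeff_mul,
      Finset.Nat.sum_antidiagonal_eq_sum_range_succ_mk, Finset.sum_range_succ]
    simp only [coeff_mk, Nat.sub_self, hd0, Nat.factorial_zero, Nat.cast_one, div_one, mul_one]
    have h := hrec (n + 1) (by omega)
    have key : ∀ k ∈ Finset.range (n + 1),
        (((n+1).choose k : ℝ) * d (n + 1 - k) * m k) / ((n+1).factorial : ℝ)
          = m k / (k.factorial : ℝ) * (d (n + 1 - k) / ((n + 1 - k).factorial : ℝ)) := by
      intro k hk
      have hk' : k ≤ n + 1 := by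
        have := Finset.mem_range.mp hk; omega
      have hfact := Nat.choose_mul_factorial_mul_factorial hk'
      have h1 : (((n+1).factorial : ℝ)) ≠ 0 := Nat.cast_ne_zero.mpr (Nat.factorial_ne_zero _)
      have h2 : ((k.factorial : ℝ)) ≠ 0 := Nat.cast_ne_zero.mpr (Nat.factorial_ne_zero _)
      have h3 : (((n+1-k).factorial : ℝ)) ≠ 0 := Nat.cast_ne_zero.mpr (Nat.factorial_ne_zero _)
      field_simp
      rw [← hfact]
      push_cast
      ring
    have hsum : (((n:ℝ) + 1) * m (n + 1)) / ((n+1).factorial : ℝ)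
        = -∑ k ∈ Finset.range (n + 1),
            m k / (k.factorial : ℝ) * (d (n + 1 - k) / ((n + 1 - k).factorial : ℝ)) := by
      have h' : ((n:ℝ) + 1) * m (n + 1)
          = -∑ k ∈ Finset.range (n + 1), ((n+1).choose k : ℝ) * d (n + 1 - k) * m k := by
        push_cast at h
        linarith
      rw [h', neg_div, Finset.sum_div, Finset.sum_congr rfl key]
    have : m (n + 1) / ((n+1).factorial : ℝ) * ((n:ℝ) + 1)
        = (((n:ℝ) + 1) * m (n + 1)) / ((n+1).factorial : ℝ) := by ring
    rw [this, hsum]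
    ring
end

section
/- Let D ∈ ℝ⟦X⟧ be a formal power series with constant coefficient 1. Then there exists a unique formal power series φ ∈ ℝ⟦X⟧ with constant coefficient 1 satisfying X · φ' = φ · (1 - D), where φ' denotes the formal derivative of φ. -/
open PowerSeries Finset

private noncomputable def solCoeff (c : ℕ → ℝ) : ℕ → ℝ
  | 0 => 1
  | (n+1) => ((n : ℝ) + 1)⁻¹ * ∑ k ∈ (Finset.range (n+1)).attach,
      solCoeff c k.1 * c (n + 1 - k.1)
  decreasing_by exact Finset.mem_range.mp k.2

private lemma solCoeff_succ (c : ℕ → ℝ) (n : ℕ) :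
    solCoeff c (n+1) = ((n : ℝ) + 1)⁻¹ * ∑ k ∈ Finset.range (n+1),
      solCoeff c k * c (n + 1 - k) := by
  rw [solCoeff.eq_2, Finset.sum_attach (Finset.range (n+1)) (fun k => solCoeff c k * c (n + 1 - k))]

/-- The ODE holds iff all coefficients satisfy the recurrence. -/
private lemma ode_iff (D φ : PowerSeries ℝ) (hD : PowerSeries.constantCoeff D = 1) :
    (PowerSeries.X * (d⁄dX ℝ) φ = φ * (1 - D)) ↔
    ∀ n : ℕ, ((n : ℝ) + 1) * coeff (n+1) φ =
      ∑ k ∈ Finset.range (n+1), coeff k φ * coeff (n + 1 - k) (1 - D) := by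
  have hc0 : coeff 0 (1 - D) = 0 := by
    simp [PowerSeries.coeff_zero_eq_constantCoeff, hD]
  constructor
  · intro h n
    have := congrArg (coeff (n+1)) h
    rw [coeff_succ_X_mul, coeff_derivative, PowerSeries.coeff_mul,
      Finset.Nat.sum_antidiagonal_eq_sum_range_succ_mk, Finset.sum_range_succ] at this
    simp only [Nat.sub_self, hc0, mul_zero, add_zero] at this
    rw [mul_comm]
    exact this
  · intro h
    ext m
    cases m with
    | zero =>
      simp only [PowerSeries.coeff_zero_eq_constantCoeff, map_mul, PowerSeries.constantCoeff_X,
        zero_mul]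
      rw [PowerSeries.coeff_zero_eq_constantCoeff] at hc0
      rw [hc0, mul_zero]
    | succ n =>
      rw [coeff_succ_X_mul, coeff_derivative, PowerSeries.coeff_mul,
        Finset.Nat.sum_antidiagonal_eq_sum_range_succ_mk, Finset.sum_range_succ]
      simp only [Nat.sub_self, hc0, mul_zero, add_zero]
      rw [mul_comm]
      exact h n

theorem mgf_ode_unique_solution
    (D : PowerSeries ℝ) (hD : PowerSeries.constantCoeff D = 1) :
    ∃! φ : PowerSeries ℝ, PowerSeries.constantCoeff φ = 1 ∧
      PowerSeries.X * (d⁄dX ℝ) φ = φ * (1 - D) := by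
  set c : ℕ → ℝ := fun n => coeff n (1 - D) with hc
  refine ⟨PowerSeries.mk (solCoeff c), ⟨?_, ?_⟩, ?_⟩
  · simp [← PowerSeries.coeff_zero_eq_constantCoeff, solCoeff.eq_1]
  · rw [ode_iff D _ hD]
    intro n
    simp only [PowerSeries.coeff_mk]
    rw [solCoeff_succ]
    rw [← mul_assoc, mul_inv_cancel₀ (by positivity : ((n:ℝ)+1) ≠ 0), one_mul]
  · rintro ψ ⟨hψ0, hψ⟩
    rw [ode_iff D _ hD] at hψ
    ext m
    simp only [PowerSeries.coeff_mk]
    induction m using Nat.strong_induction_on with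
    | _ m ih =>
      cases m with
      | zero =>
        rw [PowerSeries.coeff_zero_eq_constantCoeff, hψ0, solCoeff.eq_1]
      | succ n =>
        have h := hψ n
        have hsum : ∀ k ∈ Finset.range (n+1),
            coeff k ψ * coeff (n + 1 - k) (1 - D)
              = solCoeff c k * c (n + 1 - k) := by
          intro k hk
          rw [ih k (Finset.mem_range.mp hk)]
        rw [Finset.sum_congr rfl hsum] at h
        have : coeff (n+1) ψ = ((n:ℝ)+1)⁻¹ * (((n:ℝ)+1) * coeff (n+1) ψ) := by
          rw [← mul_assoc, inv_mul_cancel₀ (by positivity : ((n:ℝ)+1) ≠ 0), one_mul]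
        rw [this, h, solCoeff_succ]
end

section
/- For every ρ ∈ (-1, 1) and all real x, y, the series ∑_{n=0}^∞ ρⁿ Hₙ(x) Hₙ(y) / n! converges and equals (1/√(1-ρ²)) · exp( -(x - ρ y)² / (2(1-ρ²)) + x²/2 ), where Hₙ denotes the n-th probabilists' Hermite polynomial. (This is the Poisson–Mehler formula, identified in the paper as the expansion dη/dμ(x|y,t) = ∑ₙ exp(-αₙ t) hₙ(x) hₙ(y) for the Ornstein–Uhlenbeck process, with ρ = exp(-α t).) -/
open Polynomial Complex MeasureTheory Real Filter

lemma norm_gaussC (t : ℝ) : ‖Complex.exp (-(t:ℂ)^2/2)‖ = Real.exp (-(1/2) * t^2) := by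
  rw [Complex.norm_exp]
  congr 1
  have : (-(t:ℂ)^2/2) = ((-(1/2) * t^2 : ℝ) : ℂ) := by push_cast; ring
  rw [this, Complex.ofReal_re]

lemma integrable_abs_pow_gauss (k : ℕ) :
    Integrable (fun t : ℝ => |t| ^ k * Real.exp (-(1/2) * t ^ 2)) := by
  have h := (integrable_rpow_mul_exp_neg_mul_sq (b := 1/2) (by norm_num)
    (s := (k : ℝ)) (by exact_mod_cast neg_one_lt_zero.trans_le (Nat.cast_nonneg k))).abs
  refine h.congr (Filter.Eventually.of_forall fun t => ?_)
  simp only [Real.rpow_natCast, abs_mul, abs_of_pos (Real.exp_pos _)]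
  rw [_root_.abs_pow]

lemma integrable_monomial_gauss (c : ℂ) (k : ℕ) :
    Integrable (fun t : ℝ => c * (t:ℂ)^k * Complex.exp (-(t:ℂ)^2/2)) := by
  refine Integrable.mono' ((integrable_abs_pow_gauss k).const_mul ‖c‖) ?_ ?_
  · apply Continuous.aestronglyMeasurable
    continuity
  · refine Filter.Eventually.of_forall fun t => ?_
    rw [norm_mul, norm_mul, norm_gaussC]
    simp [mul_assoc, abs_nonneg]

lemma integrable_poly_gauss (P : Polynomial ℂ) :
    Integrable (fun t : ℝ => P.eval (t:ℂ) * Complex.exp (-(t:ℂ)^2/2)) := by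
  have : (fun t : ℝ => P.eval (t:ℂ) * Complex.exp (-(t:ℂ)^2/2)) =
      fun t : ℝ => ∑ k ∈ Finset.range (P.natDegree + 1),
        P.coeff k * (t:ℂ)^k * Complex.exp (-(t:ℂ)^2/2) := by
    funext t
    rw [← Finset.sum_mul, ← Polynomial.eval_eq_sum_range]
  rw [this]
  exact integrable_finset_sum _ fun k _ => integrable_monomial_gauss _ k

lemma derivative_hermite_eq (n : ℕ) :
    derivative (hermite n) = C (n : ℤ) * hermite (n - 1) := by
  induction n with
  | zero => simp [hermite_zero]
  | succ n ih =>
    rw [hermite_succ, derivative_sub, derivative_mul, derivative_X, one_mul, ih, derivative_mul]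
    cases n with
    | zero => simp [hermite_zero, hermite_one]
    | succ m =>
      have h := hermite_succ m
      simp only [Nat.add_sub_cancel, derivative_C, zero_mul, zero_add]
      have hc : (C ((m + 1 + 1 : ℕ) : ℤ)) = C ((m + 1 : ℕ) : ℤ) + 1 := by
        push_cast
        rw [map_add, map_one]
      rw [hc]
      linear_combination (-(C ((m + 1 : ℕ) : ℤ))) * h

lemma hermite_rec (n : ℕ) (x : ℝ) :
    (aeval x (hermite (n+1)) : ℝ) =
      x * aeval x (hermite n) - n * aeval x (hermite (n-1)) := by
  rw [hermite_succ, map_sub, map_mul, aeval_X, derivative_hermite_eq, map_mul, aeval_C]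
  push_cast
  ring

lemma integrable_xi_gauss (x : ℝ) (n m : ℕ) (c : ℂ) :
    Integrable fun t : ℝ => c * ((x:ℂ) + (t:ℂ) * I)^n * (t:ℂ)^m * Complex.exp (-(t:ℂ)^2/2) := by
  have h := integrable_poly_gauss (C c * (C (x:ℂ) + C I * X)^n * X^m)
  refine h.congr (Eventually.of_forall fun t => ?_)
  simp only [eval_mul, eval_pow, eval_add, eval_C, eval_X]
  ring_nf

lemma gauss_ibp (x : ℝ) (n : ℕ) :
    ∫ t : ℝ, ((x:ℂ) + (t:ℂ) * I)^n * (t:ℂ) * Complex.exp (-(t:ℂ)^2/2)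
      = n * I * ∫ t : ℝ, ((x:ℂ) + (t:ℂ) * I)^(n-1) * Complex.exp (-(t:ℂ)^2/2) := by
  have hu : ∀ t : ℝ, HasDerivAt (fun t : ℝ => ((x:ℂ) + (t:ℂ) * I)^n)
      ((n : ℂ) * ((x:ℂ) + (t:ℂ) * I)^(n-1) * I) t := by
    intro t
    have h0 : HasDerivAt (fun z : ℂ => (x:ℂ) + z * I) I (t:ℂ) := by
      simpa using ((hasDerivAt_id ((t:ℂ))).mul_const I).const_add (x:ℂ)
    have h1 := (hasDerivAt_pow n ((x:ℂ) + (t:ℂ)*I)).comp ((t:ℂ)) h0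
    have h2 : HasDerivAt (fun z : ℂ => ((x:ℂ) + z * I)^n)
        ((n : ℂ) * ((x:ℂ) + (t:ℂ) * I)^(n-1) * I) (t:ℂ) := by
      exact h1
    exact h2.comp_ofReal
  have hv : ∀ t : ℝ, HasDerivAt (fun t : ℝ => -Complex.exp (-(t:ℂ)^2/2))
      ((t:ℂ) * Complex.exp (-(t:ℂ)^2/2)) t := by
    intro t
    have h1 : HasDerivAt (fun z : ℂ => -Complex.exp (-z^2/2)) ((t:ℂ) * Complex.exp (-(t:ℂ)^2/2)) (t:ℂ) := by
      have h2 : HasDerivAt (fun z : ℂ => -z^2/2) (-(t:ℂ)) (t:ℂ) := by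
        refine ((hasDerivAt_pow 2 ((t:ℂ))).neg.div_const 2).congr_deriv ?_
        push_cast
        ring
      simpa [mul_comm] using (h2.cexp).fun_neg
    exact h1.comp_ofReal
  have key := integral_mul_deriv_eq_deriv_mul_of_integrable (fun t _ => hu t) (fun t _ => hv t)
    (by
      have := integrable_xi_gauss x n 1 1
      refine (this.congr (Eventually.of_forall fun t => ?_))
      simp only [Pi.mul_apply, pow_one, one_mul]
      ring)
    (by
      have := integrable_xi_gauss x (n-1) 0 (-(n:ℂ) * I)
      refine (this.congr (Eventually.of_forall fun t => ?_))
      simp only [Pi.mul_apply, pow_zero, mul_one]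
      ring)
    (by
      have := integrable_xi_gauss x n 0 (-1 : ℂ)
      refine (this.congr (Eventually.of_forall fun t => ?_))
      simp only [Pi.mul_apply, pow_zero, mul_one]
      ring)
  rw [show (fun t : ℝ => ((x:ℂ) + (t:ℂ) * I)^n * ((t:ℂ) * Complex.exp (-(t:ℂ)^2/2))) =
    (fun t : ℝ => ((x:ℂ) + (t:ℂ) * I)^n * (t:ℂ) * Complex.exp (-(t:ℂ)^2/2)) from
      funext fun t => by ring] at key
  rw [key, ← integral_neg, ← integral_const_mul]
  congr 1
  funext t
  ring

lemma integrable_xi_gauss' (x : ℝ) (n : ℕ) (c : ℂ) :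
    Integrable fun t : ℝ => c * ((x:ℂ) + (t:ℂ) * I)^n * Complex.exp (-(t:ℂ)^2/2) := by
  have := integrable_xi_gauss x n 0 c
  refine this.congr (Eventually.of_forall fun t => ?_)
  simp

lemma gauss_int_zero : ∫ t : ℝ, Complex.exp (-(t:ℂ)^2/2) = ((Real.sqrt (2*π) : ℝ) : ℂ) := by
  have h : ∀ t : ℝ, Complex.exp (-(t:ℂ)^2/2) = Complex.exp (-(1/2 : ℂ) * (t:ℂ)^2) := by
    intro t; ring_nf
  simp_rw [h]
  rw [integral_gaussian_complex (by norm_num : (0:ℝ) < ((1:ℂ)/2).re)]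
  have h2 : ((π : ℂ) / (1/2)) = ((2*π : ℝ) : ℂ) := by push_cast; ring
  rw [h2]
  have h3 : ((1:ℂ)/2) = (((1:ℝ)/2 : ℝ) : ℂ) := by norm_num
  rw [h3, ← Complex.ofReal_cpow (by positivity), ← Real.sqrt_eq_rpow]

lemma hermite_integral (x : ℝ) (n : ℕ) :
    ∫ t : ℝ, ((x:ℂ) + (t:ℂ) * I)^n * Complex.exp (-(t:ℂ)^2/2)
      = ((Real.sqrt (2*π) : ℝ) : ℂ) * ((aeval x (hermite n) : ℝ) : ℂ) := by
  induction n using Nat.strong_induction_on with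
  | _ n IH =>
    match n with
    | 0 => simpa using gauss_int_zero
    | (n+1) =>
      have split : (fun t : ℝ => ((x:ℂ) + (t:ℂ) * I)^(n+1) * Complex.exp (-(t:ℂ)^2/2)) =
          (fun t : ℝ => (x:ℂ) * (((x:ℂ) + (t:ℂ) * I)^n * Complex.exp (-(t:ℂ)^2/2))
            + I * (((x:ℂ) + (t:ℂ) * I)^n * (t:ℂ) * Complex.exp (-(t:ℂ)^2/2))) := by
        funext t
        rw [pow_succ]
        ring
      rw [split, integral_add, integral_const_mul, integral_const_mul]
      · rw [gauss_ibp, IH n (by omega), IH (n-1) (by omega),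
          hermite_rec n x]
        push_cast
        linear_combination ((n:ℂ) * (Real.sqrt (2*π) : ℝ) * ((aeval x (hermite (n-1)) : ℝ) : ℂ)) * Complex.I_sq
      · have := (integrable_xi_gauss' x n ((x:ℂ)))
        refine this.congr (Eventually.of_forall fun t => ?_)
        ring
      · have := (integrable_xi_gauss x n 1 I)
        refine this.congr (Eventually.of_forall fun t => ?_)
        simp only [pow_one]
        ring

lemma quad_bound (r a b k u v : ℝ) (hr0 : 0 ≤ r) (hk : 0 < k) (hrk : r = 1 - k)
    (ha : 0 ≤ a) (hb : 0 ≤ b) :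
    r*(a+|u|)*(b+|v|) - u^2/2 - v^2/2 ≤
      (r*a*b + (r*b)^2*k⁻¹ + (r*a)^2*k⁻¹) + (-(k/4)*u^2) + (-(k/4)*v^2) := by
  have hc : k * k⁻¹ = 1 := mul_inv_cancel₀ hk.ne'
  have hU : |u|^2 = u^2 := sq_abs u
  have hV : |v|^2 = v^2 := sq_abs v
  have h1 : 0 ≤ r * (|u| - |v|)^2 := mul_nonneg hr0 (sq_nonneg _)
  have e2 : (k*|u| - 2*r*b)^2 * k⁻¹ = k*|u|^2 - 4*r*b*|u| + 4*(r*b)^2*k⁻¹ := by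
    field_simp
    ring
  have e3 : (k*|v| - 2*r*a)^2 * k⁻¹ = k*|v|^2 - 4*r*a*|v| + 4*(r*a)^2*k⁻¹ := by
    field_simp
    ring
  have h2 : 0 ≤ k*|u|^2 - 4*r*b*|u| + 4*(r*b)^2*k⁻¹ :=
    e2 ▸ mul_nonneg (sq_nonneg _) (inv_nonneg.mpr hk.le)
  have h3 : 0 ≤ k*|v|^2 - 4*r*a*|v| + 4*(r*a)^2*k⁻¹ :=
    e3 ▸ mul_nonneg (sq_nonneg _) (inv_nonneg.mpr hk.le)
  subst hrk
  nlinarith [h1, h2, h3, hU, hV]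

lemma dominating_integrable (r a b : ℝ) (hr0 : 0 ≤ r) (hr1 : r < 1) (ha : 0 ≤ a) (hb : 0 ≤ b) :
    Integrable (fun p : ℝ × ℝ =>
      Real.exp (r*(a+|p.1|)*(b+|p.2|)) * Real.exp (-p.1^2/2) * Real.exp (-p.2^2/2)) := by
  set k := 1 - r with hkdef
  have hk : 0 < k := by simp [hkdef]; linarith
  have hint : Integrable (fun p : ℝ × ℝ =>
      Real.exp (r*a*b + (r*b)^2*k⁻¹ + (r*a)^2*k⁻¹) *
        (Real.exp (-(k/4)*p.1^2) * Real.exp (-(k/4)*p.2^2))) := by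
    rw [MeasureTheory.Measure.volume_eq_prod]
    exact (((integrable_exp_neg_mul_sq (by linarith : (0:ℝ) < k/4)).mul_prod
      (integrable_exp_neg_mul_sq (by linarith : (0:ℝ) < k/4)))).const_mul _
  refine hint.mono' ?_ ?_
  · apply Continuous.aestronglyMeasurable
    continuity
  · refine Filter.Eventually.of_forall fun p => ?_
    rw [Real.norm_eq_abs, abs_of_pos (by positivity)]
    rw [← Real.exp_add, ← Real.exp_add, ← Real.exp_add, ← Real.exp_add]
    apply Real.exp_le_exp.mpr
    have := quad_bound r a b k p.1 p.2 hr0 hk (by simp [hkdef]) ha hb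
    linarith

lemma sqrt_piC {s : ℝ} (hs : 0 < s) :
    ((π:ℂ) / ((s/2 : ℝ):ℂ))^(1/2 : ℂ) = ((Real.sqrt (2*π/s) : ℝ) : ℂ) := by
  have h2 : ((π : ℂ) / ((s/2 : ℝ):ℂ)) = ((2*π/s : ℝ) : ℂ) := by
    push_cast
    field_simp
  rw [h2]
  have h3 : ((1:ℂ)/2) = (((1:ℝ)/2 : ℝ) : ℂ) := by norm_num
  rw [h3, ← Complex.ofReal_cpow (by positivity), ← Real.sqrt_eq_rpow]

lemma exp_re_bound (ρ x y u v : ℝ) :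
    ((ρ:ℂ)*((x:ℂ)+(u:ℂ)*I)*((y:ℂ)+(v:ℂ)*I) - (u:ℂ)^2/2 - (v:ℂ)^2/2).re
      ≤ |ρ| * (|x| + |u|) * (|y| + |v|) - u^2/2 - v^2/2 := by
  have he : ((ρ:ℂ)*((x:ℂ)+(u:ℂ)*I)*((y:ℂ)+(v:ℂ)*I) - (u:ℂ)^2/2 - (v:ℂ)^2/2)
      = ((ρ*(x*y-u*v) - u^2/2 - v^2/2 : ℝ):ℂ) + ((ρ*(x*v+u*y) : ℝ):ℂ)*I := by
    push_cast
    ring_nf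
    simp [Complex.I_sq]
    ring
  rw [he]
  simp only [Complex.add_re, Complex.ofReal_re, Complex.mul_re, Complex.I_re, Complex.I_im,
    Complex.ofReal_im, mul_zero, zero_mul, sub_zero, mul_one, zero_sub, add_zero]
  have A : ρ*(x*y) ≤ |ρ| * |x| * |y| := by
    calc ρ*(x*y) ≤ |ρ*(x*y)| := le_abs_self _
    _ = |ρ| * |x| * |y| := by rw [abs_mul, abs_mul]; ring
  have B : -(ρ*(u*v)) ≤ |ρ| * |u| * |v| := by
    calc -(ρ*(u*v)) ≤ |ρ*(u*v)| := neg_le_abs _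
    _ = |ρ| * |u| * |v| := by rw [abs_mul, abs_mul]; ring
  nlinarith [mul_nonneg (mul_nonneg (abs_nonneg ρ) (abs_nonneg x)) (abs_nonneg v),
    mul_nonneg (mul_nonneg (abs_nonneg ρ) (abs_nonneg u)) (abs_nonneg y)]

lemma mehler_integrand_integrable (ρ x y : ℝ) (h1 : -1 < ρ) (h2 : ρ < 1) :
    Integrable (fun p : ℝ × ℝ =>
      Complex.exp ((ρ:ℂ)*((x:ℂ)+(p.1:ℂ)*I)*((y:ℂ)+(p.2:ℂ)*I) - (p.1:ℂ)^2/2 - (p.2:ℂ)^2/2)) := by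
  refine (dominating_integrable |ρ| |x| |y| (abs_nonneg _) (abs_lt.mpr ⟨h1, h2⟩)
    (abs_nonneg _) (abs_nonneg _)).mono' ?_ ?_
  · apply Continuous.aestronglyMeasurable
    apply Continuous.cexp
    continuity
  · refine Filter.Eventually.of_forall fun p => ?_
    rw [Complex.norm_exp, ← Real.exp_add, ← Real.exp_add]
    apply Real.exp_le_exp.mpr
    have := exp_re_bound ρ x y p.1 p.2
    linarith

lemma mehler_integral (ρ x y : ℝ) (h1 : -1 < ρ) (h2 : ρ < 1) :
    ∫ p : ℝ × ℝ, Complex.exp ((ρ:ℂ)*((x:ℂ)+(p.1:ℂ)*I)*((y:ℂ)+(p.2:ℂ)*I)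
        - (p.1:ℂ)^2/2 - (p.2:ℂ)^2/2)
      = ((2*π/Real.sqrt (1-ρ^2) : ℝ) : ℂ)
        * Complex.exp (((-(x-ρ*y)^2/(2*(1-ρ^2)) + x^2/2 : ℝ) : ℂ)) := by
  have hρ2 : 0 < 1 - ρ^2 := by nlinarith
  rw [MeasureTheory.Measure.volume_eq_prod, MeasureTheory.integral_prod _
    (by rw [← MeasureTheory.Measure.volume_eq_prod]; exact mehler_integrand_integrable ρ x y h1 h2)]
  have inner : ∀ u : ℝ, (∫ v : ℝ, Complex.exp ((ρ:ℂ)*((x:ℂ)+(u:ℂ)*I)*((y:ℂ)+(v:ℂ)*I)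
      - (u:ℂ)^2/2 - (v:ℂ)^2/2))
      = ((Real.sqrt (2*π) : ℝ):ℂ) * Complex.exp ((((ρ^2-1)/2 : ℝ):ℂ)*(u:ℂ)^2
          + (((ρ*y - ρ^2*x : ℝ):ℂ)*I)*(u:ℂ) + ((ρ*x*y - ρ^2*x^2/2 : ℝ):ℂ)) := by
    intro u
    have h : ∀ v : ℝ, ((ρ:ℂ)*((x:ℂ)+(u:ℂ)*I)*((y:ℂ)+(v:ℂ)*I) - (u:ℂ)^2/2 - (v:ℂ)^2/2)
        = (-(1/2) : ℂ)*(v:ℂ)^2 + ((ρ:ℂ)*((x:ℂ)+(u:ℂ)*I)*I)*(v:ℂ)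
          + ((ρ:ℂ)*((x:ℂ)+(u:ℂ)*I)*(y:ℂ) - (u:ℂ)^2/2) := by
      intro v
      ring
    simp_rw [h]
    rw [integral_cexp_quadratic (by norm_num : (-(1/2) : ℂ).re < 0)]
    have hpi : ((π:ℂ) / -(-(1/2))) = ((π:ℂ) / (((1:ℝ)/2 : ℝ):ℂ)) := by norm_num
    rw [hpi, sqrt_piC one_pos]
    have harg : ((ρ:ℂ)*((x:ℂ)+(u:ℂ)*I)*(y:ℂ) - (u:ℂ)^2/2)
        - ((ρ:ℂ)*((x:ℂ)+(u:ℂ)*I)*I)^2/(4 * (-(1/2) : ℂ))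
        = (((ρ^2-1)/2 : ℝ):ℂ)*(u:ℂ)^2 + (((ρ*y - ρ^2*x : ℝ):ℂ)*I)*(u:ℂ)
          + ((ρ*x*y - ρ^2*x^2/2 : ℝ):ℂ) := by
      push_cast
      linear_combination ((ρ:ℂ)^2*(x:ℂ)^2/2 + (ρ:ℂ)^2*(x:ℂ)*(u:ℂ)*I
        + (ρ:ℂ)^2*(u:ℂ)^2*(I^2-1)/2) * Complex.I_sq
    rw [harg]
    norm_num
  simp_rw [inner]
  rw [MeasureTheory.integral_const_mul]
  rw [integral_cexp_quadratic (by
    rw [Complex.ofReal_re]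
    linarith : ((((ρ^2-1)/2 : ℝ):ℂ)).re < 0)]
  have hneg : ((π:ℂ) / -((((ρ^2-1)/2 : ℝ)):ℂ)) = ((π:ℂ) / (((1-ρ^2)/2 : ℝ):ℂ)) := by
    push_cast
    ring_nf
  rw [hneg, sqrt_piC hρ2]
  have harg2 : ((ρ*x*y - ρ^2*x^2/2 : ℝ):ℂ)
      - ((((ρ*y - ρ^2*x : ℝ):ℂ)*I))^2/(4*((((ρ^2-1)/2 : ℝ)):ℂ))
      = ((-(x-ρ*y)^2/(2*(1-ρ^2)) + x^2/2 : ℝ) : ℂ) := by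
    have hI : ((((ρ*y - ρ^2*x : ℝ):ℂ)*I))^2 = -(((ρ*y - ρ^2*x : ℝ):ℂ))^2 := by
      rw [mul_pow, Complex.I_sq]
      ring
    rw [hI]
    have hne : ((ρ:ℂ)^2 - 1) ≠ 0 := by
      have h0 : ((ρ^2 - 1 : ℝ):ℂ) ≠ 0 := Complex.ofReal_ne_zero.mpr (by nlinarith)
      push_cast at h0
      exact h0
    have hne3 : ((1:ℂ) - (ρ:ℂ)^2) ≠ 0 := by
      intro h
      apply hne
      linear_combination -h
    have h4 : (4*((((ρ^2-1)/2 : ℝ)):ℂ)) ≠ 0 := by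
      push_cast
      intro hcon
      apply hne
      linear_combination hcon/2
    have key : (-(((ρ*y - ρ^2*x : ℝ):ℂ))^2)/(4*((((ρ^2-1)/2 : ℝ)):ℂ))
        = ((ρ*x*y - ρ^2*x^2/2 : ℝ):ℂ) - ((-(x-ρ*y)^2/(2*(1-ρ^2)) + x^2/2 : ℝ) : ℂ) := by
      rw [div_eq_iff h4]
      push_cast
      field_simp [hne3]
      have hm : ((16:ℂ)-(ρ:ℂ)^2*16) * ((16:ℂ)-(ρ:ℂ)^2*16)⁻¹ = 1 :=
        mul_inv_cancel₀ (by intro hcon; apply hne; linear_combination -hcon/16)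
      ring
    linear_combination -key
  rw [harg2]
  have hsqrt : Real.sqrt (2*π) * Real.sqrt (2*π/(1-ρ^2)) = 2*π/Real.sqrt (1-ρ^2) := by
    rw [Real.sqrt_div (by positivity : (0:ℝ) ≤ 2*π), ← mul_div_assoc,
      Real.mul_self_sqrt (by positivity)]
  rw [← hsqrt]
  push_cast
  ring

lemma norm_gaussC' (t : ℝ) : ‖Complex.exp (-(t:ℂ)^2/2)‖ = Real.exp (-t^2/2) := by
  rw [norm_gaussC]
  congr 1
  ring

theorem poisson_mehler_formula
    (ρ : ℝ) (hρ : ρ ∈ Set.Ioo (-1 : ℝ) 1) (x y : ℝ) :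
    HasSum
      (fun n : ℕ =>
        ρ ^ n * (Polynomial.aeval x (Polynomial.hermite n) : ℝ) *
          (Polynomial.aeval y (Polynomial.hermite n) : ℝ) / (n.factorial : ℝ))
      (Real.exp (-(x - ρ * y) ^ 2 / (2 * (1 - ρ ^ 2)) + x ^ 2 / 2) /
        Real.sqrt (1 - ρ ^ 2)) := by
  obtain ⟨h1, h2⟩ := hρ
  have hr1 : |ρ| < 1 := abs_lt.mpr ⟨h1, h2⟩
  set F : ℕ → ℝ × ℝ → ℂ := fun n p =>
    ((ρ:ℂ)^n / (n.factorial : ℂ)) * (((x:ℂ) + (p.1:ℂ)*I)^n * Complex.exp (-(p.1:ℂ)^2/2))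
      * (((y:ℂ) + (p.2:ℂ)*I)^n * Complex.exp (-(p.2:ℂ)^2/2)) with hF
  have hFint : ∀ n, Integrable (F n) := by
    intro n
    rw [MeasureTheory.Measure.volume_eq_prod]
    have hfx := integrable_xi_gauss' x n ((ρ:ℂ)^n / (n.factorial : ℂ))
    have hgy := integrable_xi_gauss' y n 1
    refine (hfx.mul_prod hgy).congr (Eventually.of_forall fun p => ?_)
    rw [hF]
    ring
  have eA : ∀ (a : ℝ) (u : ℝ), ‖(a:ℂ) + (u:ℂ)*I‖ ≤ |a| + |u| := by
    intro a u
    refine (norm_add_le _ _).trans_eq ?_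
    simp
  have hnorm : ∀ n p, ‖F n p‖ ≤
      (|ρ| * (|x| + |p.1|) * (|y| + |p.2|))^n / n.factorial
        * (Real.exp (-p.1^2/2) * Real.exp (-p.2^2/2)) := by
    intro n p
    have hexact : ‖F n p‖ = |ρ|^n / n.factorial
        * (‖(x:ℂ) + (p.1:ℂ)*I‖^n * Real.exp (-p.1^2/2))
        * (‖(y:ℂ) + (p.2:ℂ)*I‖^n * Real.exp (-p.2^2/2)) := by
      rw [hF]
      simp only [norm_mul, norm_div, norm_pow, norm_gaussC', Complex.norm_real,
        Complex.norm_natCast, Real.norm_eq_abs]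
    rw [hexact, mul_pow, mul_pow]
    have b1 := eA x p.1
    have b2 := eA y p.2
    calc |ρ|^n / n.factorial * (‖(x:ℂ) + (p.1:ℂ)*I‖^n * Real.exp (-p.1^2/2))
        * (‖(y:ℂ) + (p.2:ℂ)*I‖^n * Real.exp (-p.2^2/2))
        ≤ |ρ|^n / n.factorial * ((|x| + |p.1|)^n * Real.exp (-p.1^2/2))
          * ((|y| + |p.2|)^n * Real.exp (-p.2^2/2)) := by
          gcongr <;> positivity
      _ = |ρ|^n * (|x| + |p.1|)^n * (|y| + |p.2|)^n / n.factorial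
          * (Real.exp (-p.1^2/2) * Real.exp (-p.2^2/2)) := by ring
  have hgint := dominating_integrable |ρ| |x| |y| (abs_nonneg _) hr1 (abs_nonneg _) (abs_nonneg _)
  have hsummable : Summable (fun n => ∫ p : ℝ × ℝ, ‖F n p‖) := by
    refine summable_of_sum_range_le (c := ∫ p : ℝ × ℝ,
      Real.exp (|ρ| * (|x| + |p.1|) * (|y| + |p.2|)) * Real.exp (-p.1^2/2) * Real.exp (-p.2^2/2))
      (fun n => integral_nonneg fun p => norm_nonneg _) (fun N => ?_)
    rw [← MeasureTheory.integral_finset_sum _ (fun i _ => (hFint i).norm)]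
    refine MeasureTheory.integral_mono
      (integrable_finset_sum _ (fun i _ => (hFint i).norm)) hgint (fun p => ?_)
    have hz : (0:ℝ) ≤ |ρ| * (|x| + |p.1|) * (|y| + |p.2|) := by positivity
    calc ∑ n ∈ Finset.range N, ‖F n p‖
        ≤ ∑ n ∈ Finset.range N, (|ρ| * (|x| + |p.1|) * (|y| + |p.2|))^n / n.factorial
            * (Real.exp (-p.1^2/2) * Real.exp (-p.2^2/2)) :=
          Finset.sum_le_sum fun n _ => hnorm n p
      _ = (∑ n ∈ Finset.range N, (|ρ| * (|x| + |p.1|) * (|y| + |p.2|))^n / n.factorial)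
            * (Real.exp (-p.1^2/2) * Real.exp (-p.2^2/2)) := by rw [Finset.sum_mul]
      _ ≤ Real.exp (|ρ| * (|x| + |p.1|) * (|y| + |p.2|))
            * (Real.exp (-p.1^2/2) * Real.exp (-p.2^2/2)) := by
          apply mul_le_mul_of_nonneg_right (Real.sum_le_exp_of_nonneg hz N) (by positivity)
      _ = Real.exp (|ρ| * (|x| + |p.1|) * (|y| + |p.2|)) * Real.exp (-p.1^2/2) * Real.exp (-p.2^2/2) := by
          ring
  have key := MeasureTheory.hasSum_integral_of_summable_integral_norm hFint hsummable
  have hval : ∀ n, (∫ p : ℝ × ℝ, F n p)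
      = ((2*π*(ρ^n * (aeval x (hermite n)) * (aeval y (hermite n)) / n.factorial) : ℝ) : ℂ) := by
    intro n
    rw [hF]
    rw [MeasureTheory.Measure.volume_eq_prod,
      MeasureTheory.integral_prod_mul
        (f := fun u : ℝ => ((ρ:ℂ)^n / (n.factorial : ℂ))
          * (((x:ℂ) + (u:ℂ)*I)^n * Complex.exp (-(u:ℂ)^2/2)))
        (g := fun v : ℝ => ((y:ℂ) + (v:ℂ)*I)^n * Complex.exp (-(v:ℂ)^2/2)),
      MeasureTheory.integral_const_mul, hermite_integral x n, hermite_integral y n]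
    have hs : ((Real.sqrt (2*π) : ℝ):ℂ)^2 = 2*(π:ℂ) := by
      rw [← Complex.ofReal_pow, Real.sq_sqrt (by positivity)]
      push_cast
      ring
    push_cast
    linear_combination ((ρ:ℂ)^n * ((aeval x (hermite n) : ℝ):ℂ) * ((aeval y (hermite n) : ℝ):ℂ)
      / (n.factorial : ℂ)) * hs
  have htsum : ∀ p : ℝ × ℝ, (∑' n, F n p)
      = Complex.exp ((ρ:ℂ)*((x:ℂ)+(p.1:ℂ)*I)*((y:ℂ)+(p.2:ℂ)*I)
          - (p.1:ℂ)^2/2 - (p.2:ℂ)^2/2) := by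
    intro p
    set w := (ρ:ℂ)*((x:ℂ)+(p.1:ℂ)*I)*((y:ℂ)+(p.2:ℂ)*I) with hw
    have hexp := (NormedSpace.expSeries_div_hasSum_exp w).mul_right
      (Complex.exp (-(p.1:ℂ)^2/2) * Complex.exp (-(p.2:ℂ)^2/2))
    have heq : (fun n : ℕ => w^n / (n.factorial : ℂ)
        * (Complex.exp (-(p.1:ℂ)^2/2) * Complex.exp (-(p.2:ℂ)^2/2))) = fun n => F n p := by
      funext n
      rw [hF, hw]
      rw [mul_pow, mul_pow]
      ring
    rw [heq] at hexp
    rw [hexp.tsum_eq, ← Complex.exp_eq_exp_ℂ, ← Complex.exp_add, ← Complex.exp_add]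
    congr 1
    rw [hw]
    ring
  have hJ : (∫ p : ℝ × ℝ, (∑' n, F n p))
      = ((2*π*(Real.exp (-(x - ρ*y)^2/(2*(1-ρ^2)) + x^2/2) / Real.sqrt (1-ρ^2)) : ℝ) : ℂ) := by
    rw [MeasureTheory.integral_congr_ae (Eventually.of_forall htsum), mehler_integral ρ x y h1 h2,
      ← Complex.ofReal_exp, ← Complex.ofReal_mul]
    congr 1
    ring
  have key2 : HasSum
      (fun n : ℕ => ((2*π*(ρ^n * (aeval x (hermite n)) * (aeval y (hermite n)) / n.factorial) : ℝ) : ℂ))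
      (((2*π*(Real.exp (-(x - ρ*y)^2/(2*(1-ρ^2)) + x^2/2) / Real.sqrt (1-ρ^2)) : ℝ)) : ℂ) := by
    rw [show (fun n : ℕ => ((2*π*(ρ^n * (aeval x (hermite n)) * (aeval y (hermite n))
        / n.factorial) : ℝ) : ℂ)) = fun n => ∫ p : ℝ × ℝ, F n p from funext fun n => (hval n).symm,
      ← hJ]
    exact key
  have key3 := Complex.hasSum_ofReal.mp key2
  have key4 := key3.div_const (2*π)
  have h2π : (2*π) ≠ 0 := by positivity
  have heq2 : (fun n : ℕ => 2*π*(ρ^n * (aeval x (hermite n)) * (aeval y (hermite n))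
      / n.factorial) / (2*π))
      = fun n : ℕ => ρ^n * (aeval x (hermite n)) * (aeval y (hermite n)) / n.factorial :=
    funext fun n => mul_div_cancel_left₀ _ h2π
  rw [heq2, mul_div_cancel_left₀ _ h2π] at key4
  exact key4
end
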